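/- Let ℱ be an m×n Ferrers diagram and δ ∈ {1,...,n}. For r ∈ [m] let D_r = {(i,j) ∈ [m]×[n] : j − i = n − r} denote the r-th diagonal. Then ν_min(ℱ;δ) ≥ Σ_{i=δ}^{m} max{|D_i ∩ ℱ| − δ + 1, 0}. -/

import Mathlib

/-- For an `m×n` Ferrers diagram `ℱ` and `δ ∈ {1,…,n}`,
`ν_min(ℱ;δ) ≥ Σ_{r=δ}^{m} max{|D_r ∩ ℱ| − δ + 1, 0}`, where `D_r` is the `r`-th
diagonal `{(i,j) : j − i = n − r}` (1-based; in 0-based coordinates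
`(p₁, p₂) ∈ D_r ↔ p₂ + r = p₁ + n`). -/
theorem stmt16 {m n δ : ℕ} (hδ1 : 1 ≤ δ) (hδn : δ ≤ n) (hnm : n ≤ m)
    (ℱ : Finset (Fin m × Fin n))
    (hright : ∀ p ∈ ℱ, ∀ j' : Fin n, p.2 ≤ j' → (p.1, j') ∈ ℱ)
    (htop : ∀ p ∈ ℱ, ∀ i' : Fin m, i' ≤ p.1 → (i', p.2) ∈ ℱ) :
    ∑ r ∈ Finset.Icc δ m,
        ((ℱ.filter fun p => (p.2 : ℕ) + r = (p.1 : ℕ) + n).card - (δ - 1)) ≤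
      (Finset.range δ).inf' (Finset.nonempty_range_iff.mpr (by omega))
        (fun j => ∑ t ∈ Finset.univ.filter (fun t : Fin n => (t : ℕ) < n - δ + 1 + j),
          ((ℱ.filter fun p => p.2 = t).card - j)) := by
  classical
  refine Finset.le_inf' _ _ fun j hj => ?_
  rw [Finset.mem_range] at hj
  set e := δ - 1 - j with he
  -- the set of "good" cells
  set A : Finset (Fin m × Fin n) :=
    ℱ.filter fun p =>
      j ≤ (ℱ.filter fun q =>
            (q.1 : ℕ) + (p.2 : ℕ) = (p.1 : ℕ) + (q.2 : ℕ) ∧ (q.2 : ℕ) < (p.2 : ℕ)).card ∧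
      e ≤ (ℱ.filter fun q =>
            (q.1 : ℕ) + (p.2 : ℕ) = (p.1 : ℕ) + (q.2 : ℕ) ∧ (p.2 : ℕ) < (q.2 : ℕ)).card ∧
      δ + (p.2 : ℕ) ≤ (p.1 : ℕ) + n ∧ (p.1 : ℕ) + n ≤ m + (p.2 : ℕ) with hA
  set B : Finset (Fin m × Fin n) :=
    ℱ.filter fun p => (p.2 : ℕ) < n - δ + 1 + j ∧ j ≤ (p.1 : ℕ) with hB
  have hAB : A ⊆ B := by
    intro p hp
    rw [hA, Finset.mem_filter] at hp
    obtain ⟨hpF, hL, hR, -, -⟩ := hp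
    rw [hB, Finset.mem_filter]
    refine ⟨hpF, ?_, ?_⟩
    · -- column bound, from the e cells to the right
      have hcard : (ℱ.filter fun q =>
            (q.1 : ℕ) + (p.2 : ℕ) = (p.1 : ℕ) + (q.2 : ℕ) ∧ (p.2 : ℕ) < (q.2 : ℕ)).card
          ≤ (Finset.Ioi p.2).card := by
        apply Finset.card_le_card_of_injOn (fun q => q.2)
        · intro q hq
          rw [Finset.mem_coe, Finset.mem_filter] at hq
          exact Finset.mem_coe.mpr (Finset.mem_Ioi.mpr hq.2.2)
        · intro q hq q' hq' hqq
          rw [Finset.mem_coe, Finset.mem_filter] at hq hq'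
          have h1 := hq.2.1
          have h2 := hq'.2.1
          have h3 : (q.2 : ℕ) = (q'.2 : ℕ) := congrArg Fin.val hqq
          have h4 : (q.1 : ℕ) = (q'.1 : ℕ) := by omega
          exact Prod.ext (Fin.ext h4) hqq
      rw [Fin.card_Ioi] at hcard
      have := p.2.isLt
      omega
    · -- row bound, from the j cells to the left
      have hcard : (ℱ.filter fun q =>
            (q.1 : ℕ) + (p.2 : ℕ) = (p.1 : ℕ) + (q.2 : ℕ) ∧ (q.2 : ℕ) < (p.2 : ℕ)).card
          ≤ (Finset.Iio p.1).card := by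
        apply Finset.card_le_card_of_injOn (fun q => q.1)
        · intro q hq
          rw [Finset.mem_coe, Finset.mem_filter] at hq
          have h1 := hq.2.1
          have h2 := hq.2.2
          exact (Finset.mem_coe (a := q.1)).mpr (Finset.mem_Iio.mpr (by rw [Fin.lt_def]; omega))
        · intro q hq q' hq' hqq
          rw [Finset.mem_coe, Finset.mem_filter] at hq hq'
          have h1 := hq.2.1
          have h2 := hq'.2.1
          have h3 : (q.1 : ℕ) = (q'.1 : ℕ) := congrArg Fin.val hqq
          have h4 : (q.2 : ℕ) = (q'.2 : ℕ) := by omega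
          exact Prod.ext hqq (Fin.ext h4)
      rw [Fin.card_Iio] at hcard
      omega
  -- per-diagonal estimate
  have hstep1 : ∀ r ∈ Finset.Icc δ m,
      (ℱ.filter fun p => (p.2 : ℕ) + r = (p.1 : ℕ) + n).card - (δ - 1)
        ≤ (A.filter fun p => (p.2 : ℕ) + r = (p.1 : ℕ) + n).card := by
    intro r hr
    rw [Finset.mem_Icc] at hr
    set S := ℱ.filter fun p => (p.2 : ℕ) + r = (p.1 : ℕ) + n with hS
    set d := S.card with hd
    set f : Fin m × Fin n → ℕ := fun p => (S.filter fun q => (q.2 : ℕ) < (p.2 : ℕ)).card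
      with hf
    have hmono : ∀ p ∈ S, ∀ p' ∈ S, (p.2 : ℕ) < (p'.2 : ℕ) → f p < f p' := by
      intro p hp p' hp' hlt
      apply Finset.card_lt_card
      constructor
      · exact Finset.monotone_filter_right S (fun q hq => by omega)
      · intro hsub
        have hm : p ∈ S.filter fun q => (q.2 : ℕ) < (p.2 : ℕ) :=
          hsub (Finset.mem_filter.mpr ⟨hp, hlt⟩)
        rw [Finset.mem_filter] at hm
        omega
    have hlt_d : ∀ p ∈ S, f p < d := by
      intro p hp
      apply Finset.card_lt_card
      refine ⟨Finset.filter_subset _ _, fun hsub => ?_⟩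
      have hm := hsub hp
      rw [Finset.mem_filter] at hm
      omega
    have hcoleq : ∀ p ∈ S, ∀ p' ∈ S, (p.2 : ℕ) = (p'.2 : ℕ) → p = p' := by
      intro p hp p' hp' hcol
      rw [hS, Finset.mem_filter] at hp hp'
      have h1 := hp.2
      have h2 := hp'.2
      have h3 : (p.1 : ℕ) = (p'.1 : ℕ) := by omega
      exact Prod.ext (Fin.ext h3) (Fin.ext hcol)
    have hinj : Set.InjOn f S := by
      intro p hp p' hp' hpp
      rw [Finset.mem_coe] at hp hp'
      rcases lt_trichotomy ((p.2 : ℕ)) ((p'.2 : ℕ)) with h | h | h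
      · exact absurd hpp (Nat.ne_of_lt (hmono p hp p' hp' h))
      · exact hcoleq p hp p' hp' h
      · exact absurd hpp.symm (Nat.ne_of_lt (hmono p' hp' p hp h))
    have himg : S.image f = Finset.range d := by
      apply Finset.eq_of_subset_of_card_le
      · intro x hx
        rw [Finset.mem_image] at hx
        obtain ⟨p, hp, rfl⟩ := hx
        exact Finset.mem_range.mpr (hlt_d p hp)
      · rw [Finset.card_range, Finset.card_image_of_injOn hinj]
    set G := S.filter (fun p => j ≤ f p ∧ f p + e < d) with hG
    have hGcard : d - (δ - 1) ≤ G.card := by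
      have h1 : G.image f = (Finset.range d).filter (fun x => j ≤ x ∧ x + e < d) := by
        ext x
        simp only [hG, Finset.mem_image, Finset.mem_filter, Finset.mem_range]
        constructor
        · rintro ⟨p, ⟨hpS, hjp, hpe⟩, rfl⟩
          exact ⟨hlt_d p hpS, hjp, hpe⟩
        · rintro ⟨hxd, hjx, hxe⟩
          have : x ∈ S.image f := by rw [himg]; exact Finset.mem_range.mpr hxd
          rw [Finset.mem_image] at this
          obtain ⟨p, hpS, rfl⟩ := this
          exact ⟨p, ⟨hpS, hjx, hxe⟩, rfl⟩
      have h2 : Finset.Ico j (d - e) ⊆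
          (Finset.range d).filter (fun x => j ≤ x ∧ x + e < d) := by
        intro x hx
        rw [Finset.mem_Ico] at hx
        rw [Finset.mem_filter, Finset.mem_range]
        omega
      have h3 := Finset.card_le_card h2
      rw [Nat.card_Ico, ← h1] at h3
      have h4 : (G.image f).card ≤ G.card := Finset.card_image_le
      omega
    have hGA : G ⊆ A.filter fun p => (p.2 : ℕ) + r = (p.1 : ℕ) + n := by
      intro p hp
      rw [hG, Finset.mem_filter] at hp
      obtain ⟨hpS, hjf, hfe⟩ := hp
      have hpS' := hpS
      rw [hS, Finset.mem_filter] at hpS'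
      obtain ⟨hpF, hdiag⟩ := hpS'
      rw [Finset.mem_filter]
      refine ⟨?_, hdiag⟩
      rw [hA, Finset.mem_filter]
      refine ⟨hpF, ?_, ?_, by omega, by omega⟩
      · refine le_trans hjf (Finset.card_le_card ?_)
        intro q hq
        rw [Finset.mem_filter] at hq ⊢
        obtain ⟨hqS, hqlt⟩ := hq
        rw [hS, Finset.mem_filter] at hqS
        exact ⟨hqS.1, by have := hqS.2; omega, hqlt⟩
      · have hfp : f p = (S.filter fun q => (q.2 : ℕ) < (p.2 : ℕ)).card := rfl
        have hsub : S ⊆ (S.filter fun q => (q.2 : ℕ) < (p.2 : ℕ)) ∪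
            insert p (S.filter fun q => (p.2 : ℕ) < (q.2 : ℕ)) := by
          intro q hq
          rcases lt_trichotomy ((q.2 : ℕ)) ((p.2 : ℕ)) with h | h | h
          · exact Finset.mem_union_left _ (Finset.mem_filter.mpr ⟨hq, h⟩)
          · have : q = p := hcoleq q hq p hpS h
            exact Finset.mem_union_right _ (this ▸ Finset.mem_insert_self q _)
          · exact Finset.mem_union_right _
              (Finset.mem_insert_of_mem (Finset.mem_filter.mpr ⟨hq, h⟩))
        have ha := Finset.card_le_card hsub
        have hb := Finset.card_union_le (S.filter fun q => (q.2 : ℕ) < (p.2 : ℕ))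
          (insert p (S.filter fun q => (p.2 : ℕ) < (q.2 : ℕ)))
        have hc := Finset.card_insert_le p (S.filter fun q => (p.2 : ℕ) < (q.2 : ℕ))
        have hRge : e ≤ (S.filter fun q => (p.2 : ℕ) < (q.2 : ℕ)).card := by omega
        refine le_trans hRge (Finset.card_le_card ?_)
        intro q hq
        rw [Finset.mem_filter] at hq ⊢
        obtain ⟨hqS, hqlt⟩ := hq
        rw [hS, Finset.mem_filter] at hqS
        exact ⟨hqS.1, by have := hqS.2; omega, hqlt⟩
    exact le_trans hGcard (Finset.card_le_card hGA)
  -- summing the per-diagonal estimates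
  have hstep2 : ∑ r ∈ Finset.Icc δ m,
      (A.filter fun p => (p.2 : ℕ) + r = (p.1 : ℕ) + n).card ≤ A.card := by
    rw [← Finset.card_biUnion]
    · apply Finset.card_le_card
      intro p hp
      rw [Finset.mem_biUnion] at hp
      obtain ⟨r, -, hp⟩ := hp
      exact Finset.mem_of_mem_filter p hp
    · intro r hr r' hr' hne
      rw [Function.onFun, Finset.disjoint_left]
      intro p hp hp'
      rw [Finset.mem_filter] at hp hp'
      exact hne (by omega)
  -- from B to the column sum
  have hstep3 : B.card ≤ ∑ t ∈ Finset.univ.filter (fun t : Fin n => (t : ℕ) < n - δ + 1 + j),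
      ((ℱ.filter fun p => p.2 = t).card - j) := by
    rw [Finset.card_eq_sum_card_fiberwise (f := fun p => p.2)
        (t := Finset.univ.filter (fun t : Fin n => (t : ℕ) < n - δ + 1 + j))
        (fun p hp => by
          rw [Finset.mem_coe, Finset.mem_filter] at hp
          exact Finset.mem_coe.mpr (Finset.mem_filter.mpr ⟨Finset.mem_univ _, hp.2.1⟩))]
    apply Finset.sum_le_sum
    intro t ht
    by_cases hne : (B.filter fun p => p.2 = t).Nonempty
    · obtain ⟨p₀, hp₀⟩ := hne
      rw [Finset.mem_filter, hB, Finset.mem_filter] at hp₀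
      obtain ⟨⟨hp₀F, -, hp₀j⟩, hp₀t⟩ := hp₀
      have hjm : j < m := by omega
      have hlow : j ≤ ((ℱ.filter fun p => p.2 = t).filter fun p => (p.1 : ℕ) < j).card := by
        have hle := Finset.card_le_card_of_injOn (fun i : Fin m => (i, t))
          (s := Finset.Iio (⟨j, hjm⟩ : Fin m))
          (t := (ℱ.filter fun p => p.2 = t).filter fun p => (p.1 : ℕ) < j)
          (fun i hi => by
            rw [Finset.mem_coe, Finset.mem_Iio, Fin.lt_def] at hi
            have hij : (i : ℕ) < j := hi
            have hile : i ≤ p₀.1 := by rw [Fin.le_def]; omega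
            have hmem : (i, p₀.2) ∈ ℱ := htop p₀ hp₀F i hile
            rw [Finset.mem_coe, Finset.mem_filter, Finset.mem_filter]
            refine ⟨⟨?_, rfl⟩, hij⟩
            rwa [hp₀t] at hmem)
          (fun i _ i' _ hii => congrArg Prod.fst hii)
        rwa [Fin.card_Iio] at hle
      have hsplit := Finset.card_filter_add_card_filter_not
        (s := ℱ.filter fun p => p.2 = t) (p := fun p => (p.1 : ℕ) < j)
      have hBt : B.filter (fun p => p.2 = t) ⊆
          (ℱ.filter fun p => p.2 = t).filter (fun p => ¬ (p.1 : ℕ) < j) := by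
        intro p hp
        rw [Finset.mem_filter, hB, Finset.mem_filter] at hp
        rw [Finset.mem_filter, Finset.mem_filter]
        exact ⟨⟨hp.1.1, hp.2⟩, by have := hp.1.2.2; omega⟩
      have hle2 := Finset.card_le_card hBt
      omega
    · rw [Finset.not_nonempty_iff_eq_empty] at hne
      rw [hne]
      simp
  calc ∑ r ∈ Finset.Icc δ m,
        ((ℱ.filter fun p => (p.2 : ℕ) + r = (p.1 : ℕ) + n).card - (δ - 1))
      ≤ ∑ r ∈ Finset.Icc δ m,
        (A.filter fun p => (p.2 : ℕ) + r = (p.1 : ℕ) + n).card := Finset.sum_le_sum hstep1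
    _ ≤ A.card := hstep2
    _ ≤ B.card := Finset.card_le_card hAB
    _ ≤ _ := hstep3
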